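/- Let α ≥ 0, γ ≥ 1 be real, β ∈ ℂ with β ≠ 0 and γ+α ≥ 3|β|, and let m ≥ 0. Then for all z in the open unit disc, Re(𝓡'_{α,β,γ}(z) / (𝓡_{α,β,γ})'_m(z)) ≥ (γ+α−3|β|)/(γ+α−|β|). -/

import Mathlib

open Complex

noncomputable def rabA (α γ : ℝ) (β : ℂ) (n : ℕ) : ℂ :=
  β ^ n * (Real.Gamma (γ + α) : ℂ) / (Real.Gamma ((γ + α) * (n + 1)) : ℂ)

noncomputable def rab (α γ : ℝ) (β : ℂ) (z : ℂ) : ℂ :=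
  z + ∑' k : ℕ, rabA α γ β (k + 1) * z ^ (k + 2)

noncomputable def rabPartial (α γ : ℝ) (β : ℂ) (m : ℕ) (z : ℂ) : ℂ :=
  z + ∑ k ∈ Finset.range m, rabA α γ β (k + 1) * z ^ (k + 2)

noncomputable def rabD (α γ : ℝ) (β : ℂ) (z : ℂ) : ℂ :=
  1 + ∑' k : ℕ, ((k : ℂ) + 2) * rabA α γ β (k + 1) * z ^ (k + 1)

noncomputable def rabDPartial (α γ : ℝ) (β : ℂ) (m : ℕ) (z : ℂ) : ℂ :=
  1 + ∑ k ∈ Finset.range m, ((k : ℂ) + 2) * rabA α γ β (k + 1) * z ^ (k + 1)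

noncomputable def rabAlex (α γ : ℝ) (β : ℂ) (z : ℂ) : ℂ :=
  z + ∑' k : ℕ, rabA α γ β (k + 1) / ((k : ℂ) + 2) * z ^ (k + 2)

noncomputable def rabAlexPartial (α γ : ℝ) (β : ℂ) (m : ℕ) (z : ℂ) : ℂ :=
  z + ∑ k ∈ Finset.range m, rabA α γ β (k + 1) / ((k : ℂ) + 2) * z ^ (k + 2)

lemma gamma_step {x c : ℝ} (hx : 1 ≤ x) (hc : 1 ≤ c) :
    x * Real.Gamma x ≤ Real.Gamma (x + c) := by
  have hx0 : (0:ℝ) < x := lt_of_lt_of_le one_pos hx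
  have hc0 : (0:ℝ) < c := lt_of_lt_of_le one_pos hc
  have hGx : 0 < Real.Gamma x := Real.Gamma_pos_of_pos hx0
  have hGxc : 0 < Real.Gamma (x + c) := Real.Gamma_pos_of_pos (by linarith)
  have ha : (0:ℝ) ≤ 1 - 1/c := by
    have : 1/c ≤ 1 := by rw [div_le_one hc0]; exact hc
    linarith
  have hb : (0:ℝ) ≤ 1/c := by positivity
  have hconv := Real.convexOn_log_Gamma.2 (Set.mem_Ioi.2 hx0)
    (Set.mem_Ioi.2 (show (0:ℝ) < x + c by linarith)) ha hb (by field_simp; ring)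
  have hcomb : (1 - 1/c) • x + (1/c) • (x + c) = x + 1 := by
    simp only [smul_eq_mul]
    rw [sub_mul, one_div, mul_add, inv_mul_cancel₀ hc0.ne']
    ring
  rw [hcomb] at hconv
  simp only [Function.comp] at hconv
  have hG1 : Real.Gamma (x + 1) = x * Real.Gamma x := Real.Gamma_add_one (ne_of_gt hx0)
  have hlog1 : Real.log (Real.Gamma (x + 1)) = Real.log x + Real.log (Real.Gamma x) := by
    rw [hG1, Real.log_mul (ne_of_gt hx0) (ne_of_gt hGx)]
  rw [hlog1] at hconv
  have hlx : 0 ≤ Real.log x := Real.log_nonneg hx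
  have key : Real.log x + Real.log (Real.Gamma x) ≤ Real.log (Real.Gamma (x + c)) := by
    have h2 : c * (Real.log x + Real.log (Real.Gamma x)) ≤
        c * ((1 - 1/c) • Real.log (Real.Gamma x) + (1/c) • Real.log (Real.Gamma (x + c))) :=
      mul_le_mul_of_nonneg_left hconv (le_of_lt hc0)
    simp only [smul_eq_mul] at h2
    have h3 : c * ((1 - 1/c) * Real.log (Real.Gamma x) + (1/c) * Real.log (Real.Gamma (x + c)))
        = (c - 1) * Real.log (Real.Gamma x) + Real.log (Real.Gamma (x + c)) := by
      field_simp
    rw [h3] at h2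
    nlinarith [mul_nonneg (sub_nonneg.2 hc) hlx]
  calc x * Real.Gamma x = Real.exp (Real.log x + Real.log (Real.Gamma x)) := by
        rw [Real.exp_add, Real.exp_log hx0, Real.exp_log hGx]
    _ ≤ Real.exp (Real.log (Real.Gamma (x + c))) := Real.exp_le_exp.2 key
    _ = Real.Gamma (x + c) := Real.exp_log hGxc

lemma gamma_fact {c : ℝ} (hc : 1 ≤ c) (n : ℕ) :
    c ^ n * (n.factorial : ℝ) * Real.Gamma c ≤ Real.Gamma (c * (n + 1)) := by
  induction n with
  | zero => simp
  | succ n ih =>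
    rw [show ((n+1:ℕ):ℝ) + 1 = (n:ℝ) + 1 + 1 by push_cast; ring]
    have hx : (1:ℝ) ≤ c * (n + 1) := by
      have : (1:ℝ) ≤ (n:ℝ) + 1 := by
        have := Nat.cast_nonneg (α := ℝ) n
        linarith
      nlinarith
    have h1 := gamma_step hx hc
    have harg : c * (↑n + 1) + c = c * ((n:ℝ) + 1 + 1) := by ring
    rw [harg] at h1
    have h2 : c * ((n:ℝ) + 1) * (c ^ n * (n.factorial : ℝ) * Real.Gamma c) ≤
        c * ((n:ℝ) + 1) * Real.Gamma (c * (n + 1)) := by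
      apply mul_le_mul_of_nonneg_left ih
      positivity
    calc c ^ (n+1) * ((n+1).factorial : ℝ) * Real.Gamma c
        = c * ((n:ℝ) + 1) * (c ^ n * (n.factorial : ℝ) * Real.Gamma c) := by
          push_cast [Nat.factorial_succ]
          ring
      _ ≤ c * ((n:ℝ) + 1) * Real.Gamma (c * (n + 1)) := h2
      _ ≤ Real.Gamma (c * ((n:ℝ) + 1 + 1)) := by
          calc c * ((n:ℝ) + 1) * Real.Gamma (c * (n + 1))
              ≤ Real.Gamma (c * (↑n + 1) + c) := gamma_step hx hc
            _ = Real.Gamma (c * ((n:ℝ) + 1 + 1)) := by rw [harg]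

set_option maxHeartbeats 1000000 in
theorem rabD_partial_re (α γ : ℝ) (β : ℂ) (hα : 0 ≤ α) (hγ : 1 ≤ γ)
    (hβ0 : β ≠ 0) (hβ : 3 * ‖β‖ ≤ γ + α) (m : ℕ) (z : ℂ)
    (hz : ‖z‖ < 1) :
    (γ + α - 3 * ‖β‖) / (γ + α - ‖β‖) ≤
      (rabD α γ β z / rabDPartial α γ β m z).re := by
  set c : ℝ := γ + α with hc_def
  set b : ℝ := ‖β‖ with hb_def
  have hc1 : (1:ℝ) ≤ c := by simp only [hc_def]; linarith
  have hc0 : (0:ℝ) < c := by linarith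
  have hGc : 0 < Real.Gamma c := Real.Gamma_pos_of_pos hc0
  have hb0 : 0 < b := norm_pos_iff.2 hβ0
  have h3b : 3 * b ≤ c := hβ
  have hbc : b < c := by linarith
  set t : ℝ := b / c with ht_def
  have ht0 : 0 < t := div_pos hb0 hc0
  have ht3 : t ≤ 1/3 := by
    rw [ht_def, div_le_div_iff₀ hc0 (by norm_num : (0:ℝ) < 3)]
    linarith
  set r : ℝ := ‖z‖ with hr_def
  have hr0 : 0 ≤ r := norm_nonneg z
  set q : ℝ := t * r with hq_def
  have hq0 : 0 ≤ q := mul_nonneg ht0.le hr0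
  have hqt : q < t := by
    calc q = t * r := rfl
      _ < t * 1 := by exact mul_lt_mul_of_pos_left hz ht0
      _ = t := mul_one t
  have hq3 : q < 1/3 := lt_of_lt_of_le hqt ht3
  have hq1 : q < 1 := by linarith
  set lam : ℝ := (c - 3*b)/(c - b) with hlam_def
  have hlam0 : 0 ≤ lam := div_nonneg (by linarith) (by linarith)
  have h1mlam : (1:ℝ) - lam = 2*t/(1-t) := by
    rw [hlam_def, ht_def]
    have h1 : c - b ≠ 0 := by intro h; rw [sub_eq_zero] at h; nlinarith
    have h2 : c ≠ 0 := ne_of_gt hc0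
    field_simp
    ring
  -- the terms
  set f : ℕ → ℂ := fun k => ((k:ℂ) + 2) * rabA α γ β (k+1) * z^(k+1) with hf_def
  have key : ∀ k : ℕ, ‖f k‖ ≤ 2 * q^(k+1) := by
    intro k
    have hGden : 0 < Real.Gamma (c * ((k+1:ℕ) + 1)) := by
      apply Real.Gamma_pos_of_pos
      have : (0:ℝ) < ((k+1:ℕ):ℝ) + 1 := by positivity
      positivity
    have habsA : ‖rabA α γ β (k+1)‖ =
        b^(k+1) * Real.Gamma c / Real.Gamma (c * ((k+1:ℕ) + 1)) := by
      rw [rabA]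
      rw [norm_div, norm_mul, norm_pow]
      rw [Complex.norm_real, Complex.norm_real, Real.norm_eq_abs, Real.norm_eq_abs]
      rw [abs_of_pos hGc, abs_of_pos hGden]
    have hfac : ((k:ℝ) + 2) ≤ 2 * ((k+1).factorial : ℝ) := by
      have h := Nat.self_le_factorial (k+1)
      have : ((k+1:ℕ):ℝ) ≤ ((k+1).factorial : ℝ) := Nat.cast_le.2 h
      push_cast at this ⊢
      linarith
    have hG2 : c^(k+1) * ((k+1).factorial : ℝ) * Real.Gamma c ≤
        Real.Gamma (c * ((k+1:ℕ) + 1)) := gamma_fact hc1 (k+1)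
    -- bound on the coefficient
    have hcoef : ((k:ℝ)+2) * (b^(k+1) * Real.Gamma c / Real.Gamma (c * ((k+1:ℕ) + 1)))
        ≤ 2 * t^(k+1) := by
      have hXY : ((k:ℝ)+2) * (b^(k+1) * Real.Gamma c)
          ≤ 2 * t^(k+1) * Real.Gamma (c * ((k+1:ℕ) + 1)) := by
        have step1 : ((k:ℝ)+2) * (b^(k+1) * Real.Gamma c)
            ≤ 2 * ((k+1).factorial : ℝ) * (b^(k+1) * Real.Gamma c) := by
          apply mul_le_mul_of_nonneg_right hfac
          positivity
        have step2 : 2 * ((k+1).factorial : ℝ) * (b^(k+1) * Real.Gamma c)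
            = 2 * t^(k+1) * (c^(k+1) * ((k+1).factorial : ℝ) * Real.Gamma c) := by
          rw [ht_def, div_pow]
          field_simp
        have step3 : 2 * t^(k+1) * (c^(k+1) * ((k+1).factorial : ℝ) * Real.Gamma c)
            ≤ 2 * t^(k+1) * Real.Gamma (c * ((k+1:ℕ) + 1)) := by
          apply mul_le_mul_of_nonneg_left hG2
          positivity
        calc ((k:ℝ)+2) * (b^(k+1) * Real.Gamma c)
            ≤ 2 * ((k+1).factorial : ℝ) * (b^(k+1) * Real.Gamma c) := step1
          _ = 2 * t^(k+1) * (c^(k+1) * ((k+1).factorial : ℝ) * Real.Gamma c) := step2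
          _ ≤ 2 * t^(k+1) * Real.Gamma (c * ((k+1:ℕ) + 1)) := step3
      calc ((k:ℝ)+2) * (b^(k+1) * Real.Gamma c / Real.Gamma (c * ((k+1:ℕ) + 1)))
          = ((k:ℝ)+2) * (b^(k+1) * Real.Gamma c) / Real.Gamma (c * ((k+1:ℕ) + 1)) := by
            ring
        _ ≤ 2 * t^(k+1) := by
            rw [div_le_iff₀ hGden]
            exact hXY
    -- absolute value of the full term
    have habsf : ‖f k‖ = ((k:ℝ)+2) *
        (b^(k+1) * Real.Gamma c / Real.Gamma (c * ((k+1:ℕ) + 1))) * r^(k+1) := by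
      have habsk : ‖(k:ℂ) + 2‖ = (k:ℝ) + 2 := by
        have hk2 : ((k:ℂ) + 2) = ((k + 2 : ℕ) : ℂ) := by push_cast; ring
        rw [hk2, Complex.norm_natCast]
        push_cast
        ring
      rw [hf_def]
      simp only
      rw [norm_mul, norm_mul, norm_pow, habsA, habsk]
    rw [habsf]
    calc ((k:ℝ)+2) * (b^(k+1) * Real.Gamma c / Real.Gamma (c * ((k+1:ℕ) + 1))) * r^(k+1)
        ≤ 2 * t^(k+1) * r^(k+1) := by
          apply mul_le_mul_of_nonneg_right hcoef
          positivity
      _ = 2 * q^(k+1) := by rw [hq_def, mul_pow]; ring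
  -- summability
  have hgeo : Summable (fun k : ℕ => 2 * q^(k+1)) := by
    have h := (summable_geometric_of_lt_one hq0 hq1).mul_left (2*q)
    apply h.congr
    intro k
    rw [pow_succ]
    ring
  have hsumnorm : Summable (fun k => ‖f k‖) := by
    apply Summable.of_nonneg_of_le (fun k => norm_nonneg _) key hgeo
  have hsummf : Summable f := by
    apply Summable.of_norm
    exact hsumnorm
  set N : ℝ := ∑' k, ‖f k‖ with hN_def
  have hN_le : N ≤ 2*q/(1-q) := by
    have h1 : N ≤ ∑' k, 2 * q^(k+1) := Summable.tsum_le_tsum key hsumnorm hgeo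
    have h2 : ∑' k : ℕ, 2 * q^(k+1) = 2*q/(1-q) := by
      have h3 : (fun k : ℕ => 2 * q^(k+1)) = fun k : ℕ => (2*q) * q^k := by
        funext k
        rw [pow_succ]
        ring
      rw [h3, tsum_mul_left, tsum_geometric_of_lt_one hq0 hq1]
      rw [div_eq_mul_inv]
    linarith [h1, h2.symm ▸ h1]
  have hN0 : 0 ≤ N := tsum_nonneg (fun k => norm_nonneg _)
  have hN1 : N < 1 := by
    apply lt_of_le_of_lt hN_le
    rw [div_lt_one (by linarith)]
    linarith
  have hNlam : N ≤ 1 - lam := by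
    rw [h1mlam]
    apply le_trans hN_le
    rw [div_le_div_iff₀ (by linarith) (by linarith)]
    nlinarith
  set σ : ℝ := ∑ k ∈ Finset.range m, ‖f k‖ with hσ_def
  have hσ0 : 0 ≤ σ := Finset.sum_nonneg (fun k _ => norm_nonneg _)
  have hσN : σ ≤ N := Summable.sum_le_tsum (Finset.range m)
    (fun k _ => norm_nonneg _) hsumnorm
  have hσ1 : σ < 1 := lt_of_le_of_lt hσN hN1
  set v : ℂ := rabDPartial α γ β m z with hv_def
  set u : ℂ := rabD α γ β z with hu_def
  have hv_eq : v = 1 + ∑ k ∈ Finset.range m, f k := rfl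
  have hu_eq : u = 1 + ∑' k, f k := rfl
  have hsum_abs : ‖∑ k ∈ Finset.range m, f k‖ ≤ σ := by
    exact norm_sum_le (Finset.range m) f
  have hvabs : 1 - σ ≤ ‖v‖ := by
    have h1 := norm_add_le (1 + ∑ k ∈ Finset.range m, f k)
      (-(∑ k ∈ Finset.range m, f k))
    simp only [add_neg_cancel_right, norm_one, norm_neg] at h1
    rw [hv_eq]
    linarith [hsum_abs, h1]
  have hvpos : 0 < ‖v‖ := lt_of_lt_of_le (by linarith) hvabs
  have hvne : v ≠ 0 := by
    intro h
    rw [h] at hvpos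
    simp at hvpos
  -- tail
  have hsplit := (Summable.sum_add_tsum_nat_add (f := f) m hsummf).symm
  have htailsum : Summable (fun k => ‖f (k + m)‖) :=
    (summable_nat_add_iff m).2 hsumnorm
  have hnormsplit := (Summable.sum_add_tsum_nat_add (f := fun k => ‖f k‖) m hsumnorm).symm
  have huv : u - v = ∑' k, f (k + m) := by
    rw [hu_eq, hv_eq, hsplit]
    ring
  have htail : ‖u - v‖ ≤ N - σ := by
    rw [huv]
    have h0 : Summable (fun k => ‖f (k + m)‖) := by
      exact htailsum
    have h1 : ‖∑' k, f (k + m)‖ ≤ ∑' k, ‖f (k + m)‖ := by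
      exact norm_tsum_le_tsum_norm h0
    have h2 : ∑' k, ‖f (k + m)‖ = N - σ := by
      rw [hN_def, hnormsplit]
      ring
    linarith
  -- final computation
  have hdiv : u / v = 1 + (u - v) / v := by
    field_simp
    ring
  rw [hdiv, Complex.add_re, Complex.one_re]
  have hre : -(‖(u - v) / v‖) ≤ ((u - v) / v).re := by
    have := Complex.abs_re_le_norm ((u - v) / v)
    cases' abs_le.1 this with h1 h2
    linarith
  have habsdiv : ‖(u - v) / v‖ ≤ (N - σ)/(1 - σ) := by
    rw [norm_div]
    apply div_le_div₀ (by linarith) htail (by linarith) hvabs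
  have hfinal : (N - σ)/(1 - σ) ≤ 1 - lam := by
    rw [div_le_iff₀ (by linarith : (0:ℝ) < 1 - σ)]
    nlinarith [mul_nonneg hlam0 hσ0]
  linarith
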